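/- Let $H_i \subseteq H_{i+1}'$ where the pair $(H_i, H_{i+1})$ is ascending (i.e., $H_i \cong H_{i+1}$ or $H_i \cong H_{i+1} \setminus e$ for some edge $e$), and let $M_i \subseteq H_i$, $M_{i+1} \subseteq H_{i+1}$ be isolated matchings. If either (a) $e(H_{i+1} \setminus M_{i+1}) = e(H_i \setminus M_i) + 1$, or (b) $e(H_{i+1} \setminus M_{i+1}) = e(H_i \setminus M_i)$ and $H_{i+1} \cong H_i$, then the pair $(H_i \setminus M_i, H_{i+1} \setminus M_{i+1})$ is ascending. -/

import Mathlib

/-- Two edge-pieces are isomorphic if the induced graphs on their supports are isomorphic. -/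
def IsoPieces {V W : Type} (A : SimpleGraph V) (B : SimpleGraph W) : Prop :=
  Nonempty ((A.induce A.support) ≃g (B.induce B.support))

/-- A pair of graphs `(A, B)` is ascending if `A ≅ B` or `A ≅ B - e` for some edge `e` of `B`. -/
def AscendingPair {V W : Type} (A : SimpleGraph V) (B : SimpleGraph W) : Prop :=
  IsoPieces A B ∨ ∃ e ∈ B.edgeSet, IsoPieces A (B.deleteEdges {e})

/-- `M` is an isolated matching of `G`: `M ≤ G`, its edges are pairwise vertex-disjoint, and
no vertex of `M` is incident to an edge of `G` outside `M`. -/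
def IsIsolatedMatching {V : Type} (M G : SimpleGraph V) : Prop :=
  M ≤ G ∧ (∀ v w w' : V, M.Adj v w → M.Adj v w' → w = w') ∧
    ∀ v ∈ M.support, ∀ w : V, G.Adj v w → M.Adj v w

open SimpleGraph Set

section Aux

variable {V W : Type}

lemma isoPieces_of_bijOn (G : SimpleGraph V) (H : SimpleGraph W) (f : V → W)
    (hbij : Set.BijOn f G.support H.support)
    (hadj : ∀ v ∈ G.support, ∀ w ∈ G.support, (G.Adj v w ↔ H.Adj (f v) (f w))) :
    IsoPieces G H := by
  refine ⟨⟨hbij.equiv f, ?_⟩⟩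
  intro a b
  show H.Adj _ _ ↔ G.Adj _ _
  have h1 : ((hbij.equiv f) a : W) = f ↑a := rfl
  have h2 : ((hbij.equiv f) b : W) = f ↑b := rfl
  simp only [Function.Embedding.coe_subtype]
  rw [h1, h2]
  exact (hadj a a.2 b b.2).symm

lemma bijOn_of_isoPieces [Nonempty W] {G : SimpleGraph V} {H : SimpleGraph W}
    (h : IsoPieces G H) :
    ∃ f : V → W, Set.BijOn f G.support H.support ∧
      ∀ v ∈ G.support, ∀ w ∈ G.support, (G.Adj v w ↔ H.Adj (f v) (f w)) := by
  classical
  obtain ⟨φ⟩ := h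
  refine ⟨fun v => if h : v ∈ G.support then (φ ⟨v, h⟩ : W) else Classical.arbitrary W, ?_, ?_⟩
  · refine ⟨?_, ?_, ?_⟩
    · intro v hv
      simp only [dif_pos hv]
      exact (φ ⟨v, hv⟩).2
    · intro v hv u hu hvu
      simp only [dif_pos hv, dif_pos hu] at hvu
      have : φ ⟨v, hv⟩ = φ ⟨u, hu⟩ := Subtype.ext hvu
      have := φ.toEquiv.injective this
      exact congrArg Subtype.val this
    · intro y hy
      refine ⟨(φ.symm ⟨y, hy⟩ : V), (φ.symm ⟨y, hy⟩).2, ?_⟩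
      simp only [dif_pos (φ.symm ⟨y, hy⟩).2]
      have : φ ⟨(φ.symm ⟨y, hy⟩ : V), (φ.symm ⟨y, hy⟩).2⟩ = ⟨y, hy⟩ := by
        rw [show (⟨(φ.symm ⟨y, hy⟩ : V), (φ.symm ⟨y, hy⟩).2⟩ : G.support) = φ.symm ⟨y, hy⟩ from rfl]
        exact φ.apply_symm_apply _
      rw [this]
  · intro v hv w hw
    simp only [dif_pos hv, dif_pos hw]
    have := φ.map_rel_iff' (a := ⟨v, hv⟩) (b := ⟨w, hw⟩)
    simp only [comap_adj, Function.Embedding.coe_subtype] at this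
    exact this.symm

lemma support_eq_empty_of_isEmpty {G : SimpleGraph V} {H : SimpleGraph W} [IsEmpty W]
    (h : IsoPieces G H) : G.support = ∅ := by
  obtain ⟨φ⟩ := h
  have : IsEmpty (H.support : Set W) := Subtype.isEmpty_of_false (fun a => isEmptyElim a)
  have : IsEmpty (G.support : Set V) := φ.toEquiv.isEmpty
  exact Set.isEmpty_coe_sort.mp this

lemma edgeSet_eq_empty_of_support {G : SimpleGraph V} (h : G.support = ∅) :
    G.edgeSet = ∅ := by
  ext e
  induction e using Sym2.ind with
  | _ a b =>
    simp only [mem_edgeSet, Set.mem_empty_iff_false, iff_false]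
    intro hab
    have : a ∈ G.support := ⟨b, hab⟩
    simp [h] at this

lemma isoPieces_of_support_empty {G : SimpleGraph V} {H : SimpleGraph W}
    (hG : G.support = ∅) (hH : H.support = ∅) : IsoPieces G H := by
  have h1 : IsEmpty (G.support : Set V) := by rw [hG]; exact Set.isEmpty_coe_sort.mpr rfl
  have h2 : IsEmpty (H.support : Set W) := by rw [hH]; exact Set.isEmpty_coe_sort.mpr rfl
  exact ⟨⟨Equiv.equivOfIsEmpty _ _, fun {a} => isEmptyElim a⟩⟩

-- basic isolated matching facts
lemma im_support_subset {M G : SimpleGraph V} (h : IsIsolatedMatching M G) :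
    M.support ⊆ G.support := support_mono h.1

lemma im_support_sdiff {M G : SimpleGraph V} (h : IsIsolatedMatching M G) :
    (G \ M).support = G.support \ M.support := by
  ext v
  constructor
  · rintro ⟨w, hw⟩
    change (G \ M).Adj v w at hw
    rw [sdiff_adj] at hw
    refine ⟨⟨w, hw.1⟩, fun hv => hw.2 (h.2.2 v hv w hw.1)⟩
  · rintro ⟨⟨w, hw⟩, hv⟩
    refine ⟨w, ?_⟩
    change (G \ M).Adj v w
    rw [sdiff_adj]
    exact ⟨hw, fun hM => hv ⟨w, hM⟩⟩

lemma im_edge_ncard [Fintype V] {M G : SimpleGraph V} (h : IsIsolatedMatching M G) :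
    G.edgeSet.ncard = (G \ M).edgeSet.ncard + M.edgeSet.ncard := by
  rw [edgeSet_sdiff]
  exact (Set.ncard_diff_add_ncard_of_subset (edgeSet_subset_edgeSet.2 h.1)
    (Set.toFinite _)).symm

lemma sym2_out_mk (e : Sym2 V) : s(e.out.1, e.out.2) = e := by
  rw [Sym2.mk]
  rw [Prod.mk.eta]
  exact e.out_eq

lemma matching_edge_unique {M : SimpleGraph V}
    (hm : ∀ v w w' : V, M.Adj v w → M.Adj v w' → w = w')
    {e e' : Sym2 V} (he : e ∈ M.edgeSet) (he' : e' ∈ M.edgeSet) {v : V}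
    (hv : v ∈ e) (hv' : v ∈ e') : e = e' := by
  obtain ⟨x, rfl⟩ := Sym2.mem_iff_exists.mp hv
  obtain ⟨y, rfl⟩ := Sym2.mem_iff_exists.mp hv'
  rw [SimpleGraph.mem_edgeSet] at he he'
  rw [hm v x y he he']

lemma matching_support_ncard [Fintype V] {M : SimpleGraph V}
    (hm : ∀ v w w' : V, M.Adj v w → M.Adj v w' → w = w') :
    M.support.ncard = 2 * M.edgeSet.ncard := by
  classical
  have hadj : ∀ e ∈ M.edgeSet, M.Adj e.out.1 e.out.2 := by
    intro e he
    rw [← SimpleGraph.mem_edgeSet, sym2_out_mk]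
    exact he
  have hsupp : M.support = (fun e => e.out.1) '' M.edgeSet ∪ (fun e => e.out.2) '' M.edgeSet := by
    ext v
    constructor
    · rintro ⟨w, hw⟩
      have he : s(v, w) ∈ M.edgeSet := hw
      rcases Sym2.mem_iff.mp (Sym2.out_fst_mem s(v, w)) with h | h
      · exact Or.inl ⟨s(v, w), he, h⟩
      · rcases Sym2.mem_iff.mp (Sym2.out_snd_mem s(v, w)) with h2 | h2
        · exact Or.inr ⟨s(v, w), he, h2⟩
        · exfalso
          have h3 := sym2_out_mk s(v, w)
          rw [h, h2] at h3
          have hvw : v = w := by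
            rcases Sym2.eq_iff.mp h3 with ⟨h4, _⟩ | ⟨_, h5⟩
            · exact h4.symm
            · exact h5.symm
          exact M.loopless.irrefl w (hvw ▸ (hw : M.Adj v w))
    · rintro (⟨e, he, rfl⟩ | ⟨e, he, rfl⟩)
      · exact ⟨e.out.2, hadj e he⟩
      · exact ⟨e.out.1, (hadj e he).symm⟩
  have hinj1 : Set.InjOn (fun e : Sym2 V => e.out.1) M.edgeSet := by
    intro e he e' he' h
    simp only at h
    exact matching_edge_unique hm he he' (Sym2.out_fst_mem e)
      (by rw [h]; exact Sym2.out_fst_mem e')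
  have hinj2 : Set.InjOn (fun e : Sym2 V => e.out.2) M.edgeSet := by
    intro e he e' he' h
    simp only at h
    exact matching_edge_unique hm he he' (Sym2.out_snd_mem e)
      (by rw [h]; exact Sym2.out_snd_mem e')
  have hdisj : Disjoint ((fun e : Sym2 V => e.out.1) '' M.edgeSet)
      ((fun e : Sym2 V => e.out.2) '' M.edgeSet) := by
    rw [Set.disjoint_left]
    rintro v ⟨e, he, hv1⟩ ⟨e', he', hv2⟩
    simp only at hv1 hv2
    have hee : e = e' := matching_edge_unique hm he he'
      (hv1 ▸ Sym2.out_fst_mem e) (hv2 ▸ Sym2.out_snd_mem e')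
    have hv2' : e.out.2 = v := by rw [hee]; exact hv2
    have h5 := hadj e he
    rw [hv1, hv2'] at h5
    exact M.loopless.irrefl v h5
  rw [hsupp, Set.ncard_union_eq hdisj (Set.toFinite _) (Set.toFinite _),
    Set.ncard_image_of_injOn hinj1, Set.ncard_image_of_injOn hinj2]
  ring

lemma pairing_exists {V W : Type} [Fintype V] [Fintype W] [Nonempty W] :
    ∀ (n : ℕ) (s : Set V) (t : Set W) (p : V → V) (q : W → W),
    s.ncard = n → t.ncard = n →
    (∀ v ∈ s, p v ∈ s ∧ p v ≠ v ∧ p (p v) = v) →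
    (∀ w ∈ t, q w ∈ t ∧ q w ≠ w ∧ q (q w) = w) →
    ∃ γ : V → W, Set.BijOn γ s t ∧ ∀ v ∈ s, γ (p v) = q (γ v) := by
  classical
  intro n
  induction n using Nat.strong_induction_on with
  | _ n ih =>
    intro s t p q hs ht hp hq
    rcases eq_or_ne n 0 with rfl | hn
    · have hs0 : s = ∅ := by rwa [← Set.ncard_eq_zero (Set.toFinite s)]
      have ht0 : t = ∅ := by rwa [← Set.ncard_eq_zero (Set.toFinite t)]
      subst hs0; subst ht0
      exact ⟨fun _ => Classical.arbitrary W, Set.bijOn_empty _, by simp⟩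
    · have hsne : s.Nonempty := by
        rw [Set.nonempty_iff_ne_empty]
        intro h; rw [h] at hs; simp at hs; exact hn hs.symm
      have htne : t.Nonempty := by
        rw [Set.nonempty_iff_ne_empty]
        intro h; rw [h] at ht; simp at ht; exact hn ht.symm
      obtain ⟨v, hv⟩ := hsne
      obtain ⟨w, hw⟩ := htne
      obtain ⟨hpv, hpvne, hppv⟩ := hp v hv
      obtain ⟨hqw, hqwne, hqqw⟩ := hq w hw
      set s' : Set V := s \ {v, p v} with hs'def
      set t' : Set W := t \ {w, q w} with ht'def
      have hpair_s : ({v, p v} : Set V) ⊆ s := by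
        intro x hx; rcases hx with rfl | hx
        · exact hv
        · rw [Set.mem_singleton_iff] at hx; subst hx; exact hpv
      have hpair_t : ({w, q w} : Set W) ⊆ t := by
        intro x hx; rcases hx with rfl | hx
        · exact hw
        · rw [Set.mem_singleton_iff] at hx; subst hx; exact hqw
      have hcard_s' : s'.ncard = n - 2 := by
        rw [hs'def, Set.ncard_diff hpair_s (Set.toFinite _), hs,
          Set.ncard_pair (Ne.symm hpvne)]
      have hcard_t' : t'.ncard = n - 2 := by
        rw [ht'def, Set.ncard_diff hpair_t (Set.toFinite _), ht,
          Set.ncard_pair (Ne.symm hqwne)]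
      have hn2 : n - 2 < n := by omega
      have hp' : ∀ x ∈ s', p x ∈ s' ∧ p x ≠ x ∧ p (p x) = x := by
        rintro x ⟨hxs, hxn⟩
        obtain ⟨h1, h2, h3⟩ := hp x hxs
        refine ⟨⟨h1, ?_⟩, h2, h3⟩
        intro hmem
        rcases hmem with hh | hh
        · apply hxn; right; rw [Set.mem_singleton_iff]
          calc x = p (p x) := h3.symm
          _ = p v := by rw [hh]
        · rw [Set.mem_singleton_iff] at hh
          apply hxn; left
          calc x = p (p x) := h3.symm
          _ = p (p v) := by rw [hh]
          _ = v := hppv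
      have hq' : ∀ x ∈ t', q x ∈ t' ∧ q x ≠ x ∧ q (q x) = x := by
        rintro x ⟨hxs, hxn⟩
        obtain ⟨h1, h2, h3⟩ := hq x hxs
        refine ⟨⟨h1, ?_⟩, h2, h3⟩
        intro hmem
        rcases hmem with hh | hh
        · apply hxn; right; rw [Set.mem_singleton_iff]
          calc x = q (q x) := h3.symm
          _ = q w := by rw [hh]
        · rw [Set.mem_singleton_iff] at hh
          apply hxn; left
          calc x = q (q x) := h3.symm
          _ = q (q w) := by rw [hh]
          _ = w := hqqw
      obtain ⟨γ', hγ'bij, hγ'comm⟩ := ih (n - 2) hn2 s' t' p q hcard_s' hcard_t' hp' hq'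
      set γ : V → W := fun u => if u = v then w else if u = p v then q w else γ' u with hγdef
      have hγv : γ v = w := by simp [hγdef]
      have hγpv : γ (p v) = q w := by simp [hγdef, hpvne]
      have hγelse : ∀ u, u ≠ v → u ≠ p v → γ u = γ' u := by
        intro u h1 h2; simp [hγdef, h1, h2]
      have hwt' : w ∉ t' := by intro h; exact h.2 (Or.inl rfl)
      have hqwt' : q w ∉ t' := by intro h; exact h.2 (Or.inr rfl)
      have hmem_s' : ∀ u ∈ s, u ≠ v → u ≠ p v → u ∈ s' := by
        intro u hu h1 h2
        refine ⟨hu, ?_⟩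
        intro hh; rcases hh with hh | hh
        · exact h1 hh
        · exact h2 hh
      have hγ't' : ∀ u ∈ s', γ' u ∈ t' := fun u hu => hγ'bij.mapsTo hu
      refine ⟨γ, ⟨?_, ?_, ?_⟩, ?_⟩
      · -- MapsTo
        intro u hu
        rcases eq_or_ne u v with rfl | h1
        · rw [hγv]; exact hw
        rcases eq_or_ne u (p v) with rfl | h2
        · rw [hγpv]; exact hqw
        · rw [hγelse u h1 h2]
          exact (hγ't' u (hmem_s' u hu h1 h2)).1
      · -- InjOn
        have hγcases : ∀ u ∈ s, (u = v ∧ γ u = w) ∨ (u = p v ∧ γ u = q w) ∨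
            (u ∈ s' ∧ γ u = γ' u ∧ γ u ∈ t') := by
          intro u hu
          rcases eq_or_ne u v with h | h1
          · exact Or.inl ⟨h, by rw [h, hγv]⟩
          rcases eq_or_ne u (p v) with h | h2
          · exact Or.inr (Or.inl ⟨h, by rw [h, hγpv]⟩)
          · have := hγelse u h1 h2
            exact Or.inr (Or.inr ⟨hmem_s' u hu h1 h2, this,
              this ▸ hγ't' u (hmem_s' u hu h1 h2)⟩)
        intro u1 hu1 u2 hu2 heq
        rcases hγcases u1 hu1 with ⟨e1, g1⟩ | ⟨e1, g1⟩ | ⟨m1, g1, i1⟩ <;>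
          rcases hγcases u2 hu2 with ⟨e2, g2⟩ | ⟨e2, g2⟩ | ⟨m2, g2, i2⟩
        · rw [e1, e2]
        · rw [g1, g2] at heq; exact absurd heq.symm hqwne
        · rw [← heq, g1] at i2; exact absurd i2 hwt'
        · rw [g1, g2] at heq; exact absurd heq hqwne
        · rw [e1, e2]
        · rw [← heq, g1] at i2; exact absurd i2 hqwt'
        · rw [heq, g2] at i1; exact absurd i1 hwt'
        · rw [heq, g2] at i1; exact absurd i1 hqwt'
        · rw [g1, g2] at heq
          exact hγ'bij.injOn m1 m2 heq
      · -- SurjOn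
        intro y hy
        rcases eq_or_ne y w with rfl | hy1
        · exact ⟨v, hv, hγv⟩
        rcases eq_or_ne y (q w) with rfl | hy2
        · exact ⟨p v, hpv, hγpv⟩
        · have hyt' : y ∈ t' := by
            refine ⟨hy, ?_⟩
            intro hh; rcases hh with hh | hh
            · exact hy1 hh
            · exact hy2 hh
          obtain ⟨u, hu, hγu⟩ := hγ'bij.surjOn hyt'
          refine ⟨u, hu.1, ?_⟩
          have h1 : u ≠ v := by intro h; exact hu.2 (Or.inl h)
          have h2 : u ≠ p v := by intro h; exact hu.2 (Or.inr h)
          rw [hγelse u h1 h2]; exact hγu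
      · -- commute
        intro u hu
        rcases eq_or_ne u v with rfl | h1
        · rw [hγv, hγpv]
        rcases eq_or_ne u (p v) with rfl | h2
        · rw [hppv, hγv, hγpv, hqqw]
        · have hus' : u ∈ s' := hmem_s' u hu h1 h2
          obtain ⟨hpu, hpune, hppu⟩ := hp' u hus'
          have h3 : p u ≠ v := by
            intro h; exact hpu.2 (Or.inl h)
          have h4 : p u ≠ p v := by
            intro h; exact hpu.2 (Or.inr h)
          rw [hγelse (p u) h3 h4, hγelse u h1 h2]
          exact hγ'comm u hus'

end Aux
section Key
variable {V W : Type}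

lemma key [Fintype V] [Fintype W] {G M : SimpleGraph V} {H N : SimpleGraph W}
    (hGH : IsoPieces G H)
    (hM : IsIsolatedMatching M G) (hN : IsIsolatedMatching N H)
    (hcard : M.edgeSet.ncard = N.edgeSet.ncard) :
    IsoPieces (G \ M) (H \ N) := by
  classical
  cases isEmpty_or_nonempty W with
  | inl hW =>
    have hGs : G.support = ∅ := support_eq_empty_of_isEmpty hGH
    have h1 : (G \ M).support = ∅ :=
      Set.eq_empty_of_subset_empty (hGs ▸ support_mono sdiff_le)
    have h2 : (H \ N).support = ∅ := Set.eq_empty_of_isEmpty _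
    exact isoPieces_of_support_empty h1 h2
  | inr hW =>
    obtain ⟨f, hbij, hadj⟩ := bijOn_of_isoPieces hGH
    have hPs : M.support ⊆ G.support := im_support_subset hM
    have hQs : N.support ⊆ H.support := im_support_subset hN
    have hPQ : M.support.ncard = N.support.ncard := by
      rw [matching_support_ncard hM.2.1, matching_support_ncard hN.2.1, hcard]
    set D2 : Set V := (G.support \ M.support) ∩ f ⁻¹' N.support with hD2def
    set T2 : Set W := (f '' M.support) \ N.support with hT2def
    -- neighbours of D2 vertices stay in D2
    have factD2closed : ∀ v ∈ D2, ∀ u, G.Adj v u → u ∈ D2 := by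
      rintro v ⟨⟨hvs, hvP⟩, hvQ⟩ u hvu
      have hus : u ∈ G.support := ⟨v, hvu.symm⟩
      have huP : u ∉ M.support := by
        intro hu
        exact hvP ⟨u, (hM.2.2 u hu v hvu.symm).symm⟩
      have hfu : f u ∈ N.support := by
        have h1 : H.Adj (f v) (f u) := (hadj v hvs u hus).mp hvu
        have h2 : N.Adj (f v) (f u) := hN.2.2 (f v) hvQ (f u) h1
        exact ⟨f v, h2.symm⟩
      exact ⟨⟨hus, huP⟩, hfu⟩
    have factD2uniq : ∀ v ∈ D2, ∀ u u', G.Adj v u → G.Adj v u' → u = u' := by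
      rintro v ⟨⟨hvs, hvP⟩, hvQ⟩ u u' hu hu'
      have hus : u ∈ G.support := ⟨v, hu.symm⟩
      have hus' : u' ∈ G.support := ⟨v, hu'.symm⟩
      have h1 : N.Adj (f v) (f u) := hN.2.2 (f v) hvQ (f u) ((hadj v hvs u hus).mp hu)
      have h2 : N.Adj (f v) (f u') := hN.2.2 (f v) hvQ (f u') ((hadj v hvs u' hus').mp hu')
      exact hbij.injOn hus hus' (hN.2.1 (f v) (f u) (f u') h1 h2)
    -- the two facts for T2
    have factT2closed : ∀ y ∈ T2, ∀ z, H.Adj y z → z ∈ T2 := by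
      rintro y ⟨⟨x₀, hx₀, rfl⟩, hyQ⟩ z hyz
      have hzs : z ∈ H.support := ⟨f x₀, hyz.symm⟩
      obtain ⟨x, hxs, rfl⟩ := hbij.surjOn hzs
      have hGx : G.Adj x₀ x := (hadj x₀ (hPs hx₀) x hxs).mpr hyz
      have hxP : x ∈ M.support := ⟨x₀, (hM.2.2 x₀ hx₀ x hGx).symm⟩
      refine ⟨⟨x, hxP, rfl⟩, ?_⟩
      intro hzQ
      exact hyQ ⟨f x, (hN.2.2 (f x) hzQ (f x₀) hyz.symm).symm⟩
    have factT2uniq : ∀ y ∈ T2, ∀ z z', H.Adj y z → H.Adj y z' → z = z' := by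
      rintro y ⟨⟨x₀, hx₀, rfl⟩, hyQ⟩ z z' hz hz'
      obtain ⟨x, hxs, rfl⟩ := hbij.surjOn (⟨f x₀, hz.symm⟩ : z ∈ H.support)
      obtain ⟨x', hxs', rfl⟩ := hbij.surjOn (⟨f x₀, hz'.symm⟩ : z' ∈ H.support)
      have h1 : M.Adj x₀ x := hM.2.2 x₀ hx₀ x ((hadj x₀ (hPs hx₀) x hxs).mpr hz)
      have h2 : M.Adj x₀ x' := hM.2.2 x₀ hx₀ x' ((hadj x₀ (hPs hx₀) x' hxs').mpr hz')
      rw [hM.2.1 x₀ x x' h1 h2]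
    -- partner functions
    set p : V → V := fun v => if h : ∃ u, G.Adj v u then h.choose else v with hpdef
    set q : W → W := fun y => if h : ∃ z, H.Adj y z then h.choose else y with hqdef
    have hpadj : ∀ v ∈ D2, G.Adj v (p v) := by
      intro v hv
      have h : ∃ u, G.Adj v u := hv.1.1
      rw [hpdef]; simp only [dif_pos h]; exact h.choose_spec
    have hqadj : ∀ y ∈ T2, H.Adj y (q y) := by
      rintro y hy
      have h : ∃ z, H.Adj y z := by
        obtain ⟨⟨x₀, hx₀, rfl⟩, -⟩ := hy
        obtain ⟨xb, hxb⟩ := hx₀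
        exact ⟨f xb, (hadj x₀ (hPs ⟨xb, hxb⟩) xb (hPs ⟨x₀, hxb.symm⟩)).mp (hM.1 hxb)⟩
      rw [hqdef]; simp only [dif_pos h]; exact h.choose_spec
    have hpuniq : ∀ v ∈ D2, ∀ u, G.Adj v u → u = p v := fun v hv u hu =>
      factD2uniq v hv u (p v) hu (hpadj v hv)
    have hquniq : ∀ y ∈ T2, ∀ z, H.Adj y z → z = q y := fun y hy z hz =>
      factT2uniq y hy z (q y) hz (hqadj y hy)
    have hpD2 : ∀ v ∈ D2, p v ∈ D2 ∧ p v ≠ v ∧ p (p v) = v := by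
      intro v hv
      have h1 := hpadj v hv
      have h2 : p v ∈ D2 := factD2closed v hv (p v) h1
      refine ⟨h2, h1.ne', ?_⟩
      exact (hpuniq (p v) h2 v h1.symm).symm
    have hqT2 : ∀ y ∈ T2, q y ∈ T2 ∧ q y ≠ y ∧ q (q y) = y := by
      intro y hy
      have h1 := hqadj y hy
      have h2 : q y ∈ T2 := factT2closed y hy (q y) h1
      refine ⟨h2, h1.ne', ?_⟩
      exact (hquniq (q y) h2 y h1.symm).symm
    -- cardinalities
    have hD2eq : D2 = (G.support ∩ f ⁻¹' N.support) \ M.support := by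
      rw [hD2def]; ext x
      simp only [Set.mem_inter_iff, Set.mem_diff, Set.mem_preimage]
      tauto
    have hKcard : (G.support ∩ f ⁻¹' N.support).ncard = N.support.ncard := by
      have himg : f '' (G.support ∩ f ⁻¹' N.support) = N.support := by
        apply Set.Subset.antisymm
        · rintro y ⟨x, ⟨hxs, hxQ⟩, rfl⟩; exact hxQ
        · intro y hy
          obtain ⟨x, hxs, rfl⟩ := hbij.surjOn (hQs hy)
          exact ⟨x, ⟨hxs, hy⟩, rfl⟩
      conv_rhs => rw [← himg]
      exact (Set.ncard_image_of_injOn (hbij.injOn.mono Set.inter_subset_left)).symm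
    have hPcard : (f '' M.support).ncard = M.support.ncard :=
      Set.ncard_image_of_injOn (hbij.injOn.mono hPs)
    have hintcard : (M.support ∩ f ⁻¹' N.support).ncard = (N.support ∩ f '' M.support).ncard := by
      have himg : f '' (M.support ∩ f ⁻¹' N.support) = N.support ∩ f '' M.support := by
        apply Set.Subset.antisymm
        · rintro y ⟨x, ⟨hxP, hxQ⟩, rfl⟩; exact ⟨hxQ, x, hxP, rfl⟩
        · rintro y ⟨hyQ, x, hxP, rfl⟩; exact ⟨x, ⟨hxP, hyQ⟩, rfl⟩
      rw [← himg, Set.ncard_image_of_injOn (hbij.injOn.mono (fun x hx => hPs hx.1))]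
    have hD2card : D2.ncard = T2.ncard := by
      rw [hD2eq, hT2def]
      rw [show (G.support ∩ f ⁻¹' N.support) \ M.support
          = (G.support ∩ f ⁻¹' N.support) \ (M.support ∩ f ⁻¹' N.support) by
            ext x; simp only [Set.mem_diff, Set.mem_inter_iff, Set.mem_preimage]; tauto]
      rw [show (f '' M.support) \ N.support
          = (f '' M.support) \ (N.support ∩ f '' M.support) by
            ext x; simp only [Set.mem_diff, Set.mem_inter_iff]; tauto]
      rw [Set.ncard_diff (by intro x hx; exact ⟨hPs hx.1, hx.2⟩) (Set.toFinite _),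
        Set.ncard_diff (fun x hx => hx.2) (Set.toFinite _), hKcard, hPcard, hintcard, hPQ]
    -- the pairing
    obtain ⟨γ, hγbij, hγcomm⟩ := pairing_exists D2.ncard D2 T2 p q rfl hD2card.symm hpD2 hqT2
    -- the combined function
    set F : V → W := fun v => if v ∈ D2 then γ v else f v with hFdef
    have hFD2 : ∀ v ∈ D2, F v = γ v := by intro v hv; rw [hFdef]; simp [hv]
    have hFnD2 : ∀ v, v ∉ D2 → F v = f v := by intro v hv; rw [hFdef]; simp [hv]
    set D : Set V := G.support \ M.support with hDdef
    set T : Set W := H.support \ N.support with hTdef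
    set D1 : Set V := D \ D2 with hD1def
    set T1 : Set W := T \ T2 with hT1def
    have hT2subT : T2 ⊆ T := by
      rintro y ⟨⟨x, hxP, rfl⟩, hyQ⟩
      exact ⟨hbij.mapsTo (hPs hxP), hyQ⟩
    have hD2subD : D2 ⊆ D := Set.inter_subset_left
    have hbij1 : Set.BijOn f D1 T1 := by
      refine ⟨?_, hbij.injOn.mono (fun v hv => hv.1.1), ?_⟩
      · rintro v ⟨⟨hvs, hvP⟩, hvD2⟩
        have hfvQ : f v ∉ N.support := by
          intro h; exact hvD2 ⟨⟨hvs, hvP⟩, h⟩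
        refine ⟨⟨hbij.mapsTo hvs, hfvQ⟩, ?_⟩
        rintro ⟨⟨x, hxP, hfx⟩, -⟩
        exact hvP (hbij.injOn (hPs hxP) hvs hfx ▸ hxP)
      · rintro y ⟨⟨hys, hyQ⟩, hyT2⟩
        obtain ⟨x, hxs, rfl⟩ := hbij.surjOn hys
        have hxP : x ∉ M.support := by
          intro h; exact hyT2 ⟨⟨x, h, rfl⟩, hyQ⟩
        have hxD2 : x ∉ D2 := by
          rintro ⟨-, hfx⟩; exact hyQ hfx
        exact ⟨x, ⟨⟨hxs, hxP⟩, hxD2⟩, rfl⟩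
    have hbijF1 : Set.BijOn F D1 T1 :=
      hbij1.congr (fun v hv => (hFnD2 v hv.2).symm)
    have hbijF2 : Set.BijOn F D2 T2 :=
      hγbij.congr (fun v hv => (hFD2 v hv).symm)
    have hDunion : D1 ∪ D2 = D := Set.diff_union_of_subset hD2subD
    have hTunion : T1 ∪ T2 = T := Set.diff_union_of_subset hT2subT
    have hinjF : Set.InjOn F (D1 ∪ D2) := by
      intro a ha b hb heq
      rcases ha with ha | ha <;> rcases hb with hb | hb
      · exact hbijF1.injOn ha hb heq
      · exact absurd (heq ▸ hbijF1.mapsTo ha) (fun h => h.2 (hbijF2.mapsTo hb))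
      · exact absurd (heq.symm ▸ hbijF1.mapsTo hb) (fun h => h.2 (hbijF2.mapsTo ha))
      · exact hbijF2.injOn ha hb heq
    have hbijF : Set.BijOn F D T := by
      rw [← hDunion, ← hTunion]
      exact hbijF1.union hbijF2 hinjF
    -- adjacency preservation
    have hFadj : ∀ v ∈ D, ∀ u ∈ D, (G.Adj v u ↔ H.Adj (F v) (F u)) := by
      intro v hv u hu
      rcases Classical.em (v ∈ D2) with hv2 | hv2 <;> rcases Classical.em (u ∈ D2) with hu2 | hu2
      · -- both in D2
        rw [hFD2 v hv2, hFD2 u hu2]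
        constructor
        · intro h
          have h1 : u = p v := hpuniq v hv2 u h
          have h2 : γ u = q (γ v) := by rw [h1]; exact hγcomm v hv2
          rw [h2]
          exact hqadj (γ v) (hγbij.mapsTo hv2)
        · intro h
          have h1 : γ u = q (γ v) := hquniq (γ v) (hγbij.mapsTo hv2) (γ u) h
          have h2 : γ u = γ (p v) := by rw [h1]; exact (hγcomm v hv2).symm
          have h3 : u = p v := hγbij.injOn hu2 (hpD2 v hv2).1 h2
          rw [h3]
          exact hpadj v hv2
      · -- v ∈ D2, u ∉ D2 : both sides false
        have hne1 : ¬ G.Adj v u := fun h => hu2 (factD2closed v hv2 u h)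
        have hne2 : ¬ H.Adj (F v) (F u) := by
          intro h
          have : F u ∈ T2 := factT2closed (F v) (hbijF2.mapsTo hv2 : F v ∈ T2) (F u) h
          exact (hbijF1.mapsTo ⟨hu, hu2⟩).2 this
        exact iff_of_false hne1 hne2
      · -- v ∉ D2, u ∈ D2
        have hne1 : ¬ G.Adj v u := fun h => hv2 (factD2closed u hu2 v h.symm)
        have hne2 : ¬ H.Adj (F v) (F u) := by
          intro h
          have : F v ∈ T2 := factT2closed (F u) (hbijF2.mapsTo hu2 : F u ∈ T2) (F v) h.symm
          exact (hbijF1.mapsTo ⟨hv, hv2⟩).2 this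
        exact iff_of_false hne1 hne2
      · -- both in D1
        rw [hFnD2 v hv2, hFnD2 u hu2]
        exact hadj v hv.1 u hu.1
    -- assemble
    have hsupG : (G \ M).support = D := by rw [hDdef]; exact im_support_sdiff hM
    have hsupH : (H \ N).support = T := by rw [hTdef]; exact im_support_sdiff hN
    apply isoPieces_of_bijOn (G \ M) (H \ N) F
    · rw [hsupG, hsupH]; exact hbijF
    · intro v hv u hu
      rw [hsupG] at hv hu
      have hFv : F v ∈ T := hbijF.mapsTo hv
      have hFu : F u ∈ T := hbijF.mapsTo hu
      rw [sdiff_adj, sdiff_adj]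
      constructor
      · rintro ⟨h1, -⟩
        refine ⟨(hFadj v hv u hu).mp h1, ?_⟩
        intro hN2
        exact hFv.2 ⟨F u, hN2⟩
      · rintro ⟨h1, -⟩
        refine ⟨(hFadj v hv u hu).mpr h1, ?_⟩
        intro hM2
        exact hv.2 ⟨u, hM2⟩

end Key
section Key2
variable {V W : Type}

lemma sym2_exists_rep (e : Sym2 V) : ∃ a b, e = s(a, b) :=
  ⟨e.out.1, e.out.2, (sym2_out_mk e).symm⟩

lemma edge_ncard_of_isoPieces [Fintype V] [Fintype W] {G : SimpleGraph V} {H : SimpleGraph W}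
    (h : IsoPieces G H) : G.edgeSet.ncard = H.edgeSet.ncard := by
  classical
  cases isEmpty_or_nonempty W with
  | inl hW =>
    have h1 := support_eq_empty_of_isEmpty h
    have h2 : H.support = ∅ := Set.eq_empty_of_isEmpty _
    rw [edgeSet_eq_empty_of_support h1, edgeSet_eq_empty_of_support h2]
    simp
  | inr hW =>
    obtain ⟨f, hbij, hadj⟩ := bijOn_of_isoPieces h
    have hmapsto : ∀ e ∈ G.edgeSet, Sym2.map f e ∈ H.edgeSet := by
      intro e he
      obtain ⟨a, b, rfl⟩ := sym2_exists_rep e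
      rw [mem_edgeSet] at he
      rw [Sym2.map_pair_eq, mem_edgeSet]
      exact (hadj a ⟨b, he⟩ b ⟨a, he.symm⟩).mp he
    have hinj : Set.InjOn (Sym2.map f) G.edgeSet := by
      intro e he e' he' heq
      obtain ⟨a, b, rfl⟩ := sym2_exists_rep e
      obtain ⟨c, d, rfl⟩ := sym2_exists_rep e'
      rw [mem_edgeSet] at he he'
      have ha : a ∈ G.support := ⟨b, he⟩
      have hb : b ∈ G.support := ⟨a, he.symm⟩
      have hc : c ∈ G.support := ⟨d, he'⟩
      have hd : d ∈ G.support := ⟨c, he'.symm⟩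
      rw [Sym2.map_pair_eq, Sym2.map_pair_eq, Sym2.eq_iff] at heq
      rcases heq with ⟨h1, h2⟩ | ⟨h1, h2⟩
      · rw [hbij.injOn ha hc h1, hbij.injOn hb hd h2]
      · rw [hbij.injOn ha hd h1, hbij.injOn hb hc h2, Sym2.eq_swap]
    have himg : Sym2.map f '' G.edgeSet = H.edgeSet := by
      apply Set.Subset.antisymm
      · rintro e ⟨e', he', rfl⟩; exact hmapsto e' he'
      · intro e he
        obtain ⟨a, b, rfl⟩ := sym2_exists_rep e
        rw [mem_edgeSet] at he
        obtain ⟨a', ha', rfl⟩ := hbij.surjOn (⟨b, he⟩ : a ∈ H.support)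
        obtain ⟨b', hb', rfl⟩ := hbij.surjOn (⟨f a', he.symm⟩ : b ∈ H.support)
        exact ⟨s(a', b'), (G.mem_edgeSet).mpr ((hadj a' ha' b' hb').mpr he),
          Sym2.map_pair_eq f a' b'⟩
    rw [← himg, Set.ncard_image_of_injOn hinj]

lemma key' [Fintype V] [Fintype W] {G M : SimpleGraph V} {H N : SimpleGraph W}
    (hGH : IsoPieces G H)
    (hM : IsIsolatedMatching M G) (hN : IsIsolatedMatching N H)
    (hcard : M.edgeSet.ncard = N.edgeSet.ncard + 1) :
    ∃ e ∈ (H \ N).edgeSet, IsoPieces (G \ M) ((H \ N).deleteEdges {e}) := by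
  classical
  have hMne : M.edgeSet.Nonempty := by
    rw [Set.nonempty_iff_ne_empty]
    intro h
    rw [h] at hcard
    simp at hcard
  obtain ⟨e₀, he₀⟩ := hMne
  obtain ⟨a₀, b₀, rfl⟩ := sym2_exists_rep e₀
  rw [mem_edgeSet] at he₀
  have ha₀G : a₀ ∈ G.support := support_mono hM.1 ⟨b₀, he₀⟩
  have hWne : Nonempty W := by
    obtain ⟨φ⟩ := hGH
    exact ⟨(φ.toEquiv ⟨a₀, ha₀G⟩ : H.support)⟩
  obtain ⟨f, hbij, hadj⟩ := bijOn_of_isoPieces hGH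
  have hPs : M.support ⊆ G.support := im_support_subset hM
  -- find an M-edge whose image is not an N-edge
  have hex : ∃ u v, M.Adj u v ∧ s(f u, f v) ∉ N.edgeSet := by
    by_contra hcon
    push_neg at hcon
    have hsub : Sym2.map f '' M.edgeSet ⊆ N.edgeSet := by
      rintro e ⟨e', he', rfl⟩
      obtain ⟨u, v, rfl⟩ := sym2_exists_rep e'
      rw [mem_edgeSet] at he'
      rw [Sym2.map_pair_eq]
      exact hcon u v he'
    have hinj : Set.InjOn (Sym2.map f) M.edgeSet := by
      intro e he e' he' heq
      obtain ⟨u, v, rfl⟩ := sym2_exists_rep e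
      obtain ⟨u', v', rfl⟩ := sym2_exists_rep e'
      rw [mem_edgeSet] at he he'
      have hu : u ∈ G.support := hPs ⟨v, he⟩
      have hv : v ∈ G.support := hPs ⟨u, he.symm⟩
      have hu' : u' ∈ G.support := hPs ⟨v', he'⟩
      have hv' : v' ∈ G.support := hPs ⟨u', he'.symm⟩
      rw [Sym2.map_pair_eq, Sym2.map_pair_eq, Sym2.eq_iff] at heq
      rcases heq with ⟨h1, h2⟩ | ⟨h1, h2⟩
      · rw [hbij.injOn hu hu' h1, hbij.injOn hv hv' h2]
      · rw [hbij.injOn hu hv' h1, hbij.injOn hv hu' h2, Sym2.eq_swap]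
    have hle : (Sym2.map f '' M.edgeSet).ncard ≤ N.edgeSet.ncard :=
      Set.ncard_le_ncard hsub (Set.toFinite _)
    rw [Set.ncard_image_of_injOn hinj] at hle
    omega
  obtain ⟨u, v, huv, hfuv⟩ := hex
  have huP : u ∈ M.support := ⟨v, huv⟩
  have hvP : v ∈ M.support := ⟨u, huv.symm⟩
  have huG : u ∈ G.support := hPs huP
  have hvG : v ∈ G.support := hPs hvP
  have hHxy : H.Adj (f u) (f v) := (hadj u huG v hvG).mp (hM.1 huv)
  have hxQ : f u ∉ N.support := by
    intro hx
    exact hfuv ((N.mem_edgeSet).mpr (hN.2.2 (f u) hx (f v) hHxy))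
  have hyQ : f v ∉ N.support := by
    intro hy
    exact hfuv ((N.mem_edgeSet).mpr (hN.2.2 (f v) hy (f u) hHxy.symm).symm)
  have hxuniq : ∀ z, H.Adj (f u) z → z = f v := by
    intro z hz
    obtain ⟨c, hc, rfl⟩ := hbij.surjOn (⟨f u, hz.symm⟩ : z ∈ H.support)
    have h1 : G.Adj u c := (hadj u huG c hc).mpr hz
    have h2 : M.Adj u c := hM.2.2 u huP c h1
    rw [hM.2.1 u c v h2 huv]
  have hyuniq : ∀ z, H.Adj (f v) z → z = f u := by
    intro z hz
    obtain ⟨c, hc, rfl⟩ := hbij.surjOn (⟨f v, hz.symm⟩ : z ∈ H.support)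
    have h1 : G.Adj v c := (hadj v hvG c hc).mpr hz
    have h2 : M.Adj v c := hM.2.2 v hvP c h1
    rw [hM.2.1 v c u h2 huv.symm]
  set N' : SimpleGraph W := N ⊔ SimpleGraph.fromEdgeSet {s(f u, f v)} with hN'def
  have hfrom_adj : ∀ c d : W, (SimpleGraph.fromEdgeSet {s(f u, f v)}).Adj c d ↔
      (s(c, d) = s(f u, f v) ∧ c ≠ d) := by
    intro c d
    rw [fromEdgeSet_adj, Set.mem_singleton_iff]
  have hmemxy : ∀ c d : W, s(c, d) = s(f u, f v) → (c = f u ∧ d = f v) ∨ (c = f v ∧ d = f u) :=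
    fun c d h => Sym2.eq_iff.mp h
  have hN'le : N' ≤ H := by
    rw [hN'def]
    apply sup_le hN.1
    intro c d hcd
    rw [hfrom_adj] at hcd
    rcases hmemxy c d hcd.1 with ⟨rfl, rfl⟩ | ⟨rfl, rfl⟩
    · exact hHxy
    · exact hHxy.symm
  have hN'match : ∀ c d d' : W, N'.Adj c d → N'.Adj c d' → d = d' := by
    intro c d d' h1 h2
    rw [hN'def, sup_adj, hfrom_adj] at h1 h2
    rcases h1 with h1 | ⟨h1, -⟩ <;> rcases h2 with h2 | ⟨h2, -⟩
    · exact hN.2.1 c d d' h1 h2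
    · exfalso
      rcases hmemxy c d' h2 with ⟨rfl, -⟩ | ⟨rfl, -⟩
      · exact hxQ ⟨d, h1⟩
      · exact hyQ ⟨d, h1⟩
    · exfalso
      rcases hmemxy c d h1 with ⟨rfl, -⟩ | ⟨rfl, -⟩
      · exact hxQ ⟨d', h2⟩
      · exact hyQ ⟨d', h2⟩
    · rcases hmemxy c d h1 with ⟨hc1, hd1⟩ | ⟨hc1, hd1⟩ <;>
        rcases hmemxy c d' h2 with ⟨hc2, hd2⟩ | ⟨hc2, hd2⟩
      · rw [hd1, hd2]
      · exact absurd (hc1.symm.trans hc2) hHxy.ne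
      · exact absurd (hc1.symm.trans hc2) hHxy.ne'
      · rw [hd1, hd2]
  have hN'isol : ∀ c ∈ N'.support, ∀ d : W, H.Adj c d → N'.Adj c d := by
    rintro c ⟨d₀, hd₀⟩ d hcd
    change N'.Adj c d₀ at hd₀
    rw [hN'def, sup_adj, hfrom_adj] at hd₀
    rcases hd₀ with hd₀ | ⟨hd₀, -⟩
    · exact Or.inl (hN.2.2 c ⟨d₀, hd₀⟩ d hcd)
    · rcases hmemxy c d₀ hd₀ with ⟨rfl, -⟩ | ⟨rfl, -⟩
      · have : d = f v := hxuniq d hcd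
        subst this
        exact Or.inr ((hfrom_adj _ _).mpr ⟨rfl, hHxy.ne⟩)
      · have : d = f u := hyuniq d hcd
        subst this
        refine Or.inr ((hfrom_adj _ _).mpr ⟨?_, hHxy.ne'⟩)
        rw [Sym2.eq_swap]
  have hN'im : IsIsolatedMatching N' H := ⟨hN'le, hN'match, hN'isol⟩
  have hN'card : N'.edgeSet.ncard = N.edgeSet.ncard + 1 := by
    rw [hN'def, edgeSet_sup, edgeSet_fromEdgeSet]
    rw [show ({s(f u, f v)} : Set (Sym2 W)) \ Sym2.diagSet = {s(f u, f v)} by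
      ext e
      simp only [Set.mem_diff, Set.mem_singleton_iff, Set.mem_setOf_eq, Sym2.mem_diagSet]
      constructor
      · exact fun h => h.1
      · rintro rfl
        exact ⟨rfl, fun hd => hHxy.ne (Sym2.mk_isDiag_iff.mp hd)⟩]
    rw [Set.union_singleton, Set.ncard_insert_of_notMem hfuv (Set.toFinite _)]
  have hiso := key hGH hM hN'im (by omega)
  have hHeq : H \ N' = (H \ N).deleteEdges {s(f u, f v)} := by
    ext c d
    rw [sdiff_adj, deleteEdges_adj, sdiff_adj, hN'def, sup_adj, hfrom_adj,
      Set.mem_singleton_iff]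
    constructor
    · rintro ⟨h1, h2⟩
      push_neg at h2
      exact ⟨⟨h1, h2.1⟩, fun hh => h1.ne (h2.2 hh)⟩
    · rintro ⟨⟨h1, h2⟩, h3⟩
      exact ⟨h1, by push_neg; exact ⟨h2, fun hh => absurd hh h3⟩⟩
  refine ⟨s(f u, f v), ?_, ?_⟩
  · rw [edgeSet_sdiff]
    exact ⟨(H.mem_edgeSet).mpr hHxy, hfuv⟩
  · rw [← hHeq]
    exact hiso

end Key2
theorem ascending_after_deleting_isolated_matchings {V W : Type} [Fintype V] [Fintype W]
    (A M : SimpleGraph V) (B N : SimpleGraph W)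
    (hAB : AscendingPair A B)
    (hM : IsIsolatedMatching M A) (hN : IsIsolatedMatching N B)
    (hcase : (B \ N).edgeSet.ncard = (A \ M).edgeSet.ncard + 1 ∨
      ((B \ N).edgeSet.ncard = (A \ M).edgeSet.ncard ∧ IsoPieces A B)) :
    AscendingPair (A \ M) (B \ N) := by
  classical
  have hA := im_edge_ncard hM
  have hB := im_edge_ncard hN
  rcases hcase with hc | ⟨hc, hiso⟩
  · rcases hAB with hiso | ⟨e, he, hiso⟩
    · have hAB' := edge_ncard_of_isoPieces hiso
      have hcard : M.edgeSet.ncard = N.edgeSet.ncard + 1 := by omega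
      obtain ⟨g, hg, hpi⟩ := key' hiso hM hN hcard
      exact Or.inr ⟨g, hg, hpi⟩
    · set Bd := B.deleteEdges {e} with hBdef
      have hAB' := edge_ncard_of_isoPieces hiso
      have hBcount : B.edgeSet.ncard = Bd.edgeSet.ncard + 1 := by
        rw [hBdef, edgeSet_deleteEdges]
        rw [← Set.ncard_diff_singleton_add_one he (Set.toFinite _)]
      by_cases heN : e ∈ N.edgeSet
      · set N' := N.deleteEdges {e} with hN'def
        have hN'im : IsIsolatedMatching N' Bd := by
          refine ⟨?_, ?_, ?_⟩
          · intro c d h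
            rw [hN'def, deleteEdges_adj] at h
            rw [hBdef, deleteEdges_adj]
            exact ⟨hN.1 h.1, h.2⟩
          · intro c d d' h1 h2
            rw [hN'def, deleteEdges_adj] at h1 h2
            exact hN.2.1 c d d' h1.1 h2.1
          · rintro c ⟨d₀, hd₀⟩ d hcd
            change N'.Adj c d₀ at hd₀
            rw [hN'def, deleteEdges_adj] at hd₀
            rw [hBdef, deleteEdges_adj] at hcd
            rw [hN'def, deleteEdges_adj]
            exact ⟨hN.2.2 c ⟨d₀, hd₀.1⟩ d hcd.1, hcd.2⟩
        have hEq : Bd \ N' = B \ N := by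
          ext c d
          rw [sdiff_adj, sdiff_adj, hBdef, hN'def, deleteEdges_adj, deleteEdges_adj]
          constructor
          · rintro ⟨⟨h1, h2⟩, h3⟩
            exact ⟨h1, fun hn => h3 ⟨hn, h2⟩⟩
          · rintro ⟨h1, h2⟩
            have hse : s(c, d) ∉ ({e} : Set (Sym2 W)) := by
              intro hs
              rw [Set.mem_singleton_iff] at hs
              have : s(c, d) ∈ N.edgeSet := by rw [hs]; exact heN
              exact h2 ((N.mem_edgeSet).mp this)
            exact ⟨⟨h1, hse⟩, fun hn => h2 hn.1⟩
        have hNcount : N.edgeSet.ncard = N'.edgeSet.ncard + 1 := by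
          rw [hN'def, edgeSet_deleteEdges]
          rw [← Set.ncard_diff_singleton_add_one heN (Set.toFinite _)]
        have hBd := im_edge_ncard hN'im
        rw [hEq] at hBd
        have hcard : M.edgeSet.ncard = N'.edgeSet.ncard + 1 := by omega
        obtain ⟨g, hg, hpi⟩ := key' hiso hM hN'im hcard
        rw [hEq] at hg hpi
        exact Or.inr ⟨g, hg, hpi⟩
      · have hNim2 : IsIsolatedMatching N Bd := by
          refine ⟨?_, ?_, ?_⟩
          · intro c d h
            rw [hBdef, deleteEdges_adj]
            refine ⟨hN.1 h, ?_⟩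
            intro hs
            rw [Set.mem_singleton_iff] at hs
            exact heN (hs ▸ ((N.mem_edgeSet).mpr h))
          · exact hN.2.1
          · intro c hcs d hcd
            rw [hBdef, deleteEdges_adj] at hcd
            exact hN.2.2 c hcs d hcd.1
        have hEq : Bd \ N = (B \ N).deleteEdges {e} := by
          ext c d
          simp only [hBdef, sdiff_adj, deleteEdges_adj]
          tauto
        have heBN : e ∈ (B \ N).edgeSet := by
          rw [edgeSet_sdiff]; exact ⟨he, heN⟩
        have hBd := im_edge_ncard hNim2
        have hBdN : (B \ N).edgeSet.ncard = (Bd \ N).edgeSet.ncard + 1 := by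
          rw [hEq, edgeSet_deleteEdges]
          rw [← Set.ncard_diff_singleton_add_one heBN (Set.toFinite _)]
        have hcard : M.edgeSet.ncard = N.edgeSet.ncard := by omega
        have hpi := key hiso hM hNim2 hcard
        rw [hEq] at hpi
        exact Or.inr ⟨e, heBN, hpi⟩
  · have hAB' := edge_ncard_of_isoPieces hiso
    have hcard : M.edgeSet.ncard = N.edgeSet.ncard := by omega
    exact Or.inl (key hiso hM hN hcard)
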